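/- Let R be a commutative ring. The assignments X ↦ {X_m : m a maximal ideal of R} and {X(m) : m} ↦ ⋃_m X(m)* are mutually inverse bijections between Thomason subsets of Spec(R) and compatible families of Thomason subsets. Concretely: (a) if X ⊆ Spec(R) is Thomason, then for every maximal ideal m the set X_m = {p_m : p ∈ X, p ⊆ m} is a Thomason subset of Spec(R_m), the family {X_m : m} is compatible, and ⋃_m (X_m)* = X; (b) if {X(m) : m} is a compatible family of Thomason subsets and X = ⋃_m X(m)*, then X_m = X(m) for every maximal ideal m. -/

import Mathlib

open PrimeSpectrum
universe u

/-- A subset of `Spec A` is Thomason if it is a union of the zero loci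
of a set of finitely generated ideals. -/
def IsThomason {A : Type*} [CommRing A] (X : Set (PrimeSpectrum A)) : Prop :=
  ∃ 𝓘 : Set (Ideal A), (∀ I ∈ 𝓘, I.FG) ∧
    X = ⋃ I ∈ 𝓘, PrimeSpectrum.zeroLocus (I : Set A)

variable {R : Type u} [CommRing R]

/-- The map `Spec (R_m) → Spec R` induced by the localization map. -/
def locMap (m : MaximalSpectrum R) :
    PrimeSpectrum (Localization.AtPrime m.asIdeal) → PrimeSpectrum R :=
  PrimeSpectrum.comap (algebraMap R (Localization.AtPrime m.asIdeal))

/-- `Y*`: the image of a subset of `Spec (R_m)` in `Spec R`. -/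
def star (m : MaximalSpectrum R)
    (Y : Set (PrimeSpectrum (Localization.AtPrime m.asIdeal))) : Set (PrimeSpectrum R) :=
  locMap m '' Y

/-- `p_m`: the prime ideal `p R_m` of `R_m` corresponding to a prime `p ⊆ m` of `R`. -/
def localizedPrime (m : MaximalSpectrum R) (p : PrimeSpectrum R)
    (hp : p.asIdeal ≤ m.asIdeal) : PrimeSpectrum (Localization.AtPrime m.asIdeal) :=
  ⟨p.asIdeal.map (algebraMap R (Localization.AtPrime m.asIdeal)),
    IsLocalization.isPrime_of_isPrime_disjoint m.asIdeal.primeCompl _ p.asIdeal p.isPrime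
      (Set.disjoint_left.mpr fun _ hx hxp => hx (hp hxp))⟩

/-- `Z_m = {p_m : p ∈ Z, p ⊆ m}`, the localization of a subset `Z ⊆ Spec R` at `m`. -/
def setLoc (m : MaximalSpectrum R) (Z : Set (PrimeSpectrum R)) :
    Set (PrimeSpectrum (Localization.AtPrime m.asIdeal)) :=
  {q | ∃ p ∈ Z, ∃ hp : p.asIdeal ≤ m.asIdeal, localizedPrime m p hp = q}

/-- Condition (†). -/
def Dagger (Xf : ∀ m : MaximalSpectrum R, Set (PrimeSpectrum (Localization.AtPrime m.asIdeal))) :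
    Prop :=
  ∀ m m' : MaximalSpectrum R,
    {p ∈ star m (Xf m) | p.asIdeal ≤ m'.asIdeal} =
      {p ∈ star m' (Xf m') | p.asIdeal ≤ m.asIdeal}

/-- A compatible family of Thomason subsets: each `X(m)` is Thomason, the family
satisfies (†), and the union `⋃ X(m)*` is a Thomason subset of `Spec R`. -/
def CompatibleFamily
    (Xf : ∀ m : MaximalSpectrum R, Set (PrimeSpectrum (Localization.AtPrime m.asIdeal))) :
    Prop :=
  (∀ m, IsThomason (Xf m)) ∧ Dagger Xf ∧ IsThomason (⋃ m, star m (Xf m))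

lemma locMap_le (m : MaximalSpectrum R)
    (q : PrimeSpectrum (Localization.AtPrime m.asIdeal)) :
    (locMap m q).asIdeal ≤ m.asIdeal := by
  intro x hx
  by_contra hxm
  have hu : IsUnit (algebraMap R (Localization.AtPrime m.asIdeal) x) :=
    IsLocalization.map_units _ (⟨x, hxm⟩ : m.asIdeal.primeCompl)
  have hxq : algebraMap R (Localization.AtPrime m.asIdeal) x ∈ q.asIdeal := hx
  exact q.isPrime.ne_top (q.asIdeal.eq_top_of_isUnit_mem hxq hu)

lemma locMap_localizedPrime (m : MaximalSpectrum R) (p : PrimeSpectrum R)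
    (hp : p.asIdeal ≤ m.asIdeal) : locMap m (localizedPrime m p hp) = p := by
  apply PrimeSpectrum.ext
  exact IsLocalization.comap_map_of_isPrime_disjoint m.asIdeal.primeCompl _ p.isPrime
    (Set.disjoint_left.mpr fun _ hx hxp => hx (hp hxp))

lemma localizedPrime_locMap (m : MaximalSpectrum R)
    (q : PrimeSpectrum (Localization.AtPrime m.asIdeal)) (h : (locMap m q).asIdeal ≤ m.asIdeal) :
    localizedPrime m (locMap m q) h = q := by
  apply PrimeSpectrum.ext
  exact IsLocalization.map_comap m.asIdeal.primeCompl _ q.asIdeal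

lemma star_setLoc (m : MaximalSpectrum R) (X : Set (PrimeSpectrum R)) :
    star m (setLoc m X) = {p | p ∈ X ∧ p.asIdeal ≤ m.asIdeal} := by
  ext p
  constructor
  · rintro ⟨q, ⟨p', hp'X, hp'm, rfl⟩, rfl⟩
    rw [locMap_localizedPrime]
    exact ⟨hp'X, hp'm⟩
  · rintro ⟨hX, hm⟩
    exact ⟨localizedPrime m p hm, ⟨p, hX, hm, rfl⟩, locMap_localizedPrime m p hm⟩

lemma setLoc_thomason (m : MaximalSpectrum R) (X : Set (PrimeSpectrum R))
    (hX : IsThomason X) : IsThomason (setLoc m X) := by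
  obtain ⟨𝓘, hfg, hXeq⟩ := hX
  refine ⟨(Ideal.map (algebraMap R (Localization.AtPrime m.asIdeal))) '' 𝓘,
    ?_, ?_⟩
  · rintro J ⟨I, hI, rfl⟩
    exact Ideal.FG.map (hfg I hI) _
  · ext q
    constructor
    · rintro ⟨p, hpX, hpm, rfl⟩
      rw [hXeq] at hpX
      simp only [Set.mem_iUnion, PrimeSpectrum.mem_zeroLocus] at hpX
      obtain ⟨I, hI, hIle⟩ := hpX
      simp only [Set.mem_iUnion, PrimeSpectrum.mem_zeroLocus, Set.biUnion_image]
      refine ⟨I, hI, ?_⟩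
      have : I.map (algebraMap R (Localization.AtPrime m.asIdeal)) ≤
          (localizedPrime m p hpm).asIdeal :=
        Ideal.map_mono (by exact_mod_cast hIle)
      exact_mod_cast this
    · intro hq
      simp only [Set.biUnion_image, Set.mem_iUnion, PrimeSpectrum.mem_zeroLocus] at hq
      obtain ⟨I, hI, hIle⟩ := hq
      refine ⟨locMap m q, ?_, locMap_le m q, localizedPrime_locMap m q _⟩
      rw [hXeq]
      simp only [Set.mem_iUnion, PrimeSpectrum.mem_zeroLocus]
      refine ⟨I, hI, ?_⟩
      intro x hx
      have : algebraMap R (Localization.AtPrime m.asIdeal) x ∈ q.asIdeal :=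
        hIle (Ideal.mem_map_of_mem _ hx)
      exact this

lemma union_star_setLoc (X : Set (PrimeSpectrum R)) :
    (⋃ m, star m (setLoc m X)) = X := by
  ext p
  simp only [Set.mem_iUnion, star_setLoc, Set.mem_setOf_eq]
  constructor
  · rintro ⟨m, hpX, _⟩; exact hpX
  · intro hpX
    obtain ⟨M, hM, hle⟩ := p.asIdeal.exists_le_maximal p.isPrime.ne_top
    exact ⟨⟨M, hM⟩, hpX, hle⟩

/-- Proposition (gluing of Thomason subsets): `X ↦ {X_m}` and
`{X(m)} ↦ ⋃ X(m)*` are mutually inverse bijections between Thomason subsets of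
`Spec R` and compatible families of Thomason subsets. -/
theorem stmt2 :
    (∀ X : Set (PrimeSpectrum R), IsThomason X →
      CompatibleFamily (fun m => setLoc m X) ∧ (⋃ m, star m (setLoc m X)) = X) ∧
    (∀ Xf : ∀ m : MaximalSpectrum R, Set (PrimeSpectrum (Localization.AtPrime m.asIdeal)),
      CompatibleFamily Xf → ∀ m, setLoc m (⋃ m', star m' (Xf m')) = Xf m) := by
  constructor
  · intro X hX
    refine ⟨⟨fun m => setLoc_thomason m X hX, ?_, ?_⟩, union_star_setLoc X⟩
    · intro m m'
      ext p
      simp only [star_setLoc, Set.mem_setOf_eq]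
      tauto
    · rw [union_star_setLoc]; exact hX
  · rintro Xf ⟨_, hdag, _⟩ m
    ext q
    constructor
    · rintro ⟨p, hpX, hpm, rfl⟩
      obtain ⟨m', hm'⟩ := Set.mem_iUnion.mp hpX
      have hp' : p ∈ {p ∈ star m (Xf m) | p.asIdeal ≤ m'.asIdeal} := by
        rw [hdag m m']
        exact ⟨hm', hpm⟩
      obtain ⟨q', hq', hq'p⟩ := hp'.1
      have : localizedPrime m p hpm = q' := by
        subst hq'p
        exact localizedPrime_locMap m q' _
      rw [this]
      exact hq'
    · intro hq
      refine ⟨locMap m q, ?_, locMap_le m q, localizedPrime_locMap m q _⟩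
      exact Set.mem_iUnion.mpr ⟨m, ⟨q, hq, rfl⟩⟩
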